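/- Let Ω ⊆ ℝⁿ be closed and r > 0. Then Ω is r-convex if and only if Ω is σ-regular for σ = 1/(2r). -/

import Mathlib

open Filter Metric Set
open scoped Topology RealInnerProductSpace NNReal

/-- A set `Ω` is `r`-convex if for all `x, y ∈ Ω` the intersection of all closed balls of
radius `r` containing both `x` and `y` (taken to be everything if no such ball exists)
is contained in `Ω`. -/
def RConvex {n : ℕ} (r : ℝ) (Ω : Set (EuclideanSpace ℝ (Fin n))) : Prop :=
  ∀ x ∈ Ω, ∀ y ∈ Ω,
    {z : EuclideanSpace ℝ (Fin n) |
      ∀ c : EuclideanSpace ℝ (Fin n),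
        x ∈ closedBall c r → y ∈ closedBall c r → z ∈ closedBall c r} ⊆ Ω

/-- A set `Ω` is `σ`-regular if for all `x, y ∈ Ω` and `α ∈ (0,1)`, the closed ball centered
at `α x + (1-α) y` of radius `σ α (1-α) ‖x-y‖²` is contained in `Ω`. -/
def SigmaRegular {n : ℕ} (σ : ℝ) (Ω : Set (EuclideanSpace ℝ (Fin n))) : Prop :=
  ∀ x ∈ Ω, ∀ y ∈ Ω, ∀ α ∈ Set.Ioo (0:ℝ) 1,
    closedBall (α • x + (1 - α) • y) (σ * α * (1 - α) * ‖x - y‖ ^ 2) ⊆ Ω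

def spindle {n : ℕ} (r : ℝ) (x y : EuclideanSpace ℝ (Fin n)) :
    Set (EuclideanSpace ℝ (Fin n)) :=
  {z : EuclideanSpace ℝ (Fin n) |
    ∀ c : EuclideanSpace ℝ (Fin n),
      x ∈ closedBall c r → y ∈ closedBall c r → z ∈ closedBall c r}

lemma spindle_rconvex {n : ℕ} (r : ℝ) (x y : EuclideanSpace ℝ (Fin n)) :
    RConvex r (spindle r x y) :=
  fun p hp q hq z hz c h1 h2 => hz c (hp c h1 h2) (hq c h1 h2)

lemma isClosed_spindle {n : ℕ} (r : ℝ) (x y : EuclideanSpace ℝ (Fin n)) :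
    IsClosed (spindle r x y) := by
  have h : spindle r x y
      = ⋂ c ∈ {c : EuclideanSpace ℝ (Fin n) | x ∈ closedBall c r ∧ y ∈ closedBall c r},
          closedBall c r := by
    ext z
    simp only [spindle, mem_setOf_eq, mem_iInter]
    exact ⟨fun h c hc => h c hc.1 hc.2, fun h c h1 h2 => h c ⟨h1, h2⟩⟩
  rw [h]
  exact isClosed_biInter fun c _ => isClosed_closedBall

lemma real_aux2 {D E γ σ t N : ℝ} (hD : 0 < D) (hE : 0 < E) (hσ : 0 < σ)
    (ht0 : 0 < t) (ht1 : t < 1)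
    (htkey : t * (2 * D * σ * E + E) < 2 * D * (σ * E - γ)) (hN0 : 0 ≤ N)
    (hN : N ^ 2 = D ^ 2 + 2 * D * t * γ + t ^ 2 * E) : N < D + σ * t * (1 - t) * E := by
  have hρ : 0 < σ * t * (1 - t) * E :=
    mul_pos (mul_pos (mul_pos hσ ht0) (by linarith)) hE
  have h1 : N ^ 2 < (D + σ * t * (1 - t) * E) ^ 2 := by
    nlinarith [mul_pos ht0 (by linarith : 0 < 2 * D * (σ * E - γ) - t * (2 * D * σ * E + E)),
      sq_nonneg (σ * t * (1 - t) * E)]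
  calc N ≤ |N| := le_abs_self N
  _ = Real.sqrt (N ^ 2) := (Real.sqrt_sq_eq_abs N).symm
  _ < Real.sqrt ((D + σ * t * (1 - t) * E) ^ 2) := by
      exact Real.sqrt_lt_sqrt (sq_nonneg N) h1
  _ = D + σ * t * (1 - t) * E := Real.sqrt_sq (by linarith)

lemma min_not_closer {n : ℕ} {r : ℝ} (hr : 0 < r) {T : Set (EuclideanSpace ℝ (Fin n))}
    (hT : SigmaRegular (1 / (2 * r)) T) {z w p u : EuclideanSpace ℝ (Fin n)} {D : ℝ}
    (hwT : w ∈ T) (hpT : p ∈ T) (hmin : ∀ q ∈ T, D ≤ dist z q) (hD : 0 < D)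
    (hzw : z - w = D • u) (hu1 : ‖u‖ = 1)
    (hγ2 : 2 * r * ⟪u, w - p⟫ < ‖w - p‖ ^ 2) : False := by
  obtain ⟨E, hE⟩ : ∃ E, ‖w - p‖ ^ 2 = E := ⟨_, rfl⟩
  obtain ⟨γ, hγd⟩ : ∃ γ, ⟪u, w - p⟫ = γ := ⟨_, rfl⟩
  obtain ⟨σ, hσd⟩ : ∃ σ : ℝ, (1 : ℝ) / (2 * r) = σ := ⟨_, rfl⟩
  have hσ0 : 0 < σ := by rw [← hσd]; positivity
  have h2r : (0:ℝ) < 2 * r := by linarith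
  have hσr : σ * (2 * r) = 1 := by rw [← hσd]; field_simp
  have hE0 : 0 < E := by
    rcases (hE ▸ sq_nonneg ‖w - p‖ : (0:ℝ) ≤ E).lt_or_eq with h | h
    · exact h
    · exfalso
      have h0 : ‖w - p‖ ^ 2 = 0 := by rw [hE, ← h]
      have hwp0 : w - p = 0 := norm_eq_zero.mp (pow_eq_zero_iff two_ne_zero |>.mp h0)
      rw [hwp0] at hγ2
      simp at hγ2
  have hγσ : γ < σ * E := by
    have h1 : 2 * r * γ < E := by rw [← hγd, ← hE]; exact hγ2
    nlinarith [mul_pos hσ0 (by linarith : 0 < E - 2 * r * γ)]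
  -- choose t
  obtain ⟨t, htd⟩ : ∃ t : ℝ, min (1/2) (D * (σ * E - γ) / (2 * D * σ * E + E)) = t := ⟨_, rfl⟩
  have hden : 0 < 2 * D * σ * E + E := by positivity
  have ht0 : 0 < t := by
    rw [← htd]
    exact lt_min (by norm_num) (div_pos (mul_pos hD (by linarith)) hden)
  have ht1 : t < 1 := by
    rw [← htd]
    exact lt_of_le_of_lt (min_le_left _ _) (by norm_num)
  have htkey : t * (2 * D * σ * E + E) < 2 * D * (σ * E - γ) := by
    have h1 : t ≤ D * (σ * E - γ) / (2 * D * σ * E + E) := by rw [← htd]; exact min_le_right _ _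
    have h2 : t * (2 * D * σ * E + E) ≤ D * (σ * E - γ) := by
      rw [← le_div_iff₀ hden]; exact h1
    nlinarith [mul_pos hD (by linarith : 0 < σ * E - γ)]
  -- regularity ball
  have hα : (1 - t) ∈ Set.Ioo (0:ℝ) 1 := ⟨by linarith, by linarith⟩
  have hball := hT w hwT p hpT (1 - t) hα
  obtain ⟨m, hm⟩ : ∃ m, (1 - t) • w + (1 - (1 - t)) • p = m := ⟨_, rfl⟩
  rw [hm] at hball
  have hρeq : 1 / (2 * r) * (1 - t) * (1 - (1 - t)) * ‖w - p‖ ^ 2 = σ * t * (1 - t) * E := by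
    rw [hσd, hE]; ring
  rw [hρeq] at hball
  obtain ⟨ρ, hρd⟩ : ∃ ρ : ℝ, σ * t * (1 - t) * E = ρ := ⟨_, rfl⟩
  rw [hρd] at hball
  have hρ0 : 0 < ρ := by rw [← hρd]; exact mul_pos (mul_pos (mul_pos hσ0 ht0) (by linarith)) hE0
  -- distance from z to m
  have hzm : z - m = D • u + t • (w - p) := by
    rw [← hm, ← hzw]
    module
  have hN2 : ‖z - m‖ ^ 2 = D ^ 2 + 2 * D * t * γ + t ^ 2 * E := by
    rw [hzm, norm_add_sq_real, real_inner_smul_left, real_inner_smul_right, hγd,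
      norm_smul, norm_smul, Real.norm_eq_abs, Real.norm_eq_abs, abs_of_pos hD,
      abs_of_pos ht0, hu1, mul_pow, mul_pow, hE]
    ring
  obtain ⟨N, hNd⟩ : ∃ N : ℝ, ‖z - m‖ = N := ⟨_, rfl⟩
  have hN0 : 0 ≤ N := hNd ▸ norm_nonneg _
  have hlt : N < D + ρ := by
    rw [← hρd]
    exact real_aux2 hD hE0 hσ0 ht0 ht1 htkey hN0 (by rw [← hNd]; exact hN2)
  by_cases hz2 : N ≤ ρ
  · -- z itself is in the ball
    have hzT : z ∈ T := hball (by rw [mem_closedBall, dist_eq_norm, hNd]; exact hz2)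
    have := hmin z hzT
    simp only [dist_self] at this
    linarith
  · push_neg at hz2
    have hNpos : 0 < N := lt_trans hρ0 hz2
    obtain ⟨w', hw'd⟩ : ∃ w', m + (ρ / N) • (z - m) = w' := ⟨_, rfl⟩
    have hw'm : w' - m = (ρ / N) • (z - m) := by rw [← hw'd]; module
    have hw'ball : w' ∈ closedBall m ρ := by
      rw [mem_closedBall, dist_eq_norm, hw'm, norm_smul, Real.norm_eq_abs,
        abs_of_pos (div_pos hρ0 hNpos), hNd, div_mul_cancel₀ _ (ne_of_gt hNpos)]
    have hw'T : w' ∈ T := hball hw'ball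
    have hzw' : z - w' = (1 - ρ / N) • (z - m) := by rw [← hw'd]; module
    have hdzw' : dist z w' = N - ρ := by
      rw [dist_eq_norm, hzw', norm_smul, Real.norm_eq_abs, hNd,
        abs_of_nonneg (by rw [sub_nonneg]; exact (div_le_one hNpos).mpr hz2.le)]
      field_simp
    have := hmin w' hw'T
    rw [hdzw'] at this
    linarith

lemma le_of_sq_le_sq' {a b : ℝ} (h : a ^ 2 ≤ b ^ 2) (hb : 0 ≤ b) : a ≤ b :=
  calc a ≤ |a| := le_abs_self a
  _ = Real.sqrt (a ^ 2) := (Real.sqrt_sq_eq_abs a).symm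
  _ ≤ Real.sqrt (b ^ 2) := Real.sqrt_le_sqrt h
  _ = b := Real.sqrt_sq hb

lemma combo_sq {n : ℕ} (u v : EuclideanSpace ℝ (Fin n)) (α : ℝ) :
    ‖α • u + (1 - α) • v‖ ^ 2
      = α * ‖u‖ ^ 2 + (1 - α) * ‖v‖ ^ 2 - α * (1 - α) * ‖u - v‖ ^ 2 := by
  simp only [← real_inner_self_eq_norm_sq, inner_add_add_self, inner_sub_sub_self,
    real_inner_smul_left, real_inner_smul_right, real_inner_comm u v]
  ring

lemma real_aux {r α A B M L Z C : ℝ} (hr : 0 < r) (hα0 : 0 < α) (hα1 : α < 1)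
    (hA : A ≤ r) (hB : B ≤ r) (hA0 : 0 ≤ A) (hB0 : 0 ≤ B) (hM0 : 0 ≤ M) (hL0 : 0 ≤ L)
    (hM : M ^ 2 = α * A ^ 2 + (1 - α) * B ^ 2 - α * (1 - α) * L ^ 2) (hL : L ≤ A + B)
    (hZ : Z ≤ 1 / (2 * r) * α * (1 - α) * L ^ 2) (htri : C ≤ Z + M) : C ≤ r := by
  obtain ⟨d, hd⟩ : ∃ d : ℝ, α * (1 - α) * L ^ 2 = d := ⟨_, rfl⟩
  rw [hd] at hM
  have hZ' : Z ≤ d / (2 * r) := by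
    have e : 1 / (2 * r) * α * (1 - α) * L ^ 2 = d / (2 * r) := by rw [← hd]; ring
    rw [e] at hZ; exact hZ
  have hd0 : 0 ≤ d := by
    rw [← hd]
    exact mul_nonneg (mul_nonneg hα0.le (by linarith)) (sq_nonneg L)
  have h4 : α * (1 - α) ≤ 1 / 4 := by nlinarith [sq_nonneg (2 * α - 1)]
  have hL2 : L ^ 2 ≤ (2 * r) ^ 2 := by nlinarith
  have hdr : d ≤ r ^ 2 := by
    rw [← hd]
    nlinarith [mul_le_mul h4 hL2 (sq_nonneg L) (by norm_num : (0:ℝ) ≤ 1/4)]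
  have hmsq : M ^ 2 ≤ r ^ 2 - d := by
    have e3 : α * A ^ 2 ≤ α * r ^ 2 :=
      mul_le_mul_of_nonneg_left (by nlinarith) hα0.le
    have e4 : (1 - α) * B ^ 2 ≤ (1 - α) * r ^ 2 :=
      mul_le_mul_of_nonneg_left (by nlinarith) (by linarith)
    linarith [hM]
  have hrd : 0 ≤ r - d / (2 * r) := by
    rw [sub_nonneg, div_le_iff₀ (by linarith)]
    nlinarith
  have hb2 : (r - d / (2 * r)) ^ 2 = r ^ 2 - d + (d / (2 * r)) ^ 2 := by
    field_simp
    ring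
  have hmle : M ≤ r - d / (2 * r) := by
    refine le_of_sq_le_sq' ?_ hrd
    rw [hb2]
    linarith [sq_nonneg (d / (2 * r))]
  linarith

lemma rconvex_to_regular {n : ℕ} {r : ℝ} (hr : 0 < r) {Ω : Set (EuclideanSpace ℝ (Fin n))}
    (h : RConvex r Ω) : SigmaRegular (1 / (2 * r)) Ω := by
  intro x hx y hy α hα z hz
  obtain ⟨hα0, hα1⟩ := hα
  apply h x hx y hy
  intro c hxc hyc
  rw [mem_closedBall, dist_eq_norm] at hxc hyc ⊢
  rw [mem_closedBall, dist_eq_norm] at hz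
  have hm : ‖α • x + (1 - α) • y - c‖ ^ 2
      = α * ‖x - c‖ ^ 2 + (1 - α) * ‖y - c‖ ^ 2 - α * (1 - α) * ‖x - y‖ ^ 2 := by
    have h1 : α • x + (1 - α) • y - c = α • (x - c) + (1 - α) • (y - c) := by
      simp [smul_sub]; module
    have h2 : (x - c) - (y - c) = x - y := by abel
    rw [h1, combo_sq, h2]
  have hL : ‖x - y‖ ≤ ‖x - c‖ + ‖y - c‖ := by
    have h3 := norm_sub_le_norm_sub_add_norm_sub x c y
    rw [norm_sub_rev c y] at h3
    exact h3
  have htri : ‖z - c‖ ≤ ‖z - (α • x + (1 - α) • y)‖ + ‖α • x + (1 - α) • y - c‖ :=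
    norm_sub_le_norm_sub_add_norm_sub _ _ _
  exact real_aux hr hα0 hα1 hxc hyc (norm_nonneg _) (norm_nonneg _) (norm_nonneg _)
    (norm_nonneg _) hm hL hz htri

set_option maxHeartbeats 1000000 in
/-- Lemma 8: a closed set `Ω ⊆ ℝⁿ` is `r`-convex if and only if it is `1/(2r)`-regular. -/
theorem rConvex_iff_sigmaRegular {n : ℕ} (Ω : Set (EuclideanSpace ℝ (Fin n)))
    (hΩ : IsClosed Ω) (r : ℝ) (hr : 0 < r) :
    RConvex r Ω ↔ SigmaRegular (1 / (2 * r)) Ω := by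
  constructor
  · exact fun h => rconvex_to_regular hr h
  · intro hreg x hx y hy z hz
    by_contra hzΩ
    -- T = Ω ∩ spindle
    have hTreg : SigmaRegular (1 / (2 * r)) (Ω ∩ spindle r x y) := by
      intro a ha b hb α hα q hq
      exact ⟨hreg a ha.1 b hb.1 α hα hq,
        rconvex_to_regular hr (spindle_rconvex r x y) a ha.2 b hb.2 α hα hq⟩
    have hTclosed : IsClosed (Ω ∩ spindle r x y) := hΩ.inter (isClosed_spindle r x y)
    have hxT : x ∈ Ω ∩ spindle r x y := ⟨hx, fun c h1 _ => h1⟩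
    have hyT : y ∈ Ω ∩ spindle r x y := ⟨hy, fun c _ h2 => h2⟩
    -- compact slice and minimizer
    have hK : IsCompact ((Ω ∩ spindle r x y) ∩ closedBall z (dist x z)) :=
      (isCompact_closedBall z (dist x z)).inter_left hTclosed
    have hne : ((Ω ∩ spindle r x y) ∩ closedBall z (dist x z)).Nonempty :=
      ⟨x, hxT, mem_closedBall.mpr le_rfl⟩
    obtain ⟨w, hwK, hwmin⟩ := hK.exists_isMinOn hne
      ((continuous_const.dist continuous_id).continuousOn :
        ContinuousOn (fun q => dist z q) _)
    have hwmin' := isMinOn_iff.mp hwmin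
    have hwT : w ∈ Ω ∩ spindle r x y := hwK.1
    have hmin : ∀ q ∈ Ω ∩ spindle r x y, dist z w ≤ dist z q := by
      intro q hq
      by_cases hcase : dist q z ≤ dist x z
      · exact hwmin' q ⟨hq, mem_closedBall.mpr hcase⟩
      · have h1 : dist z w ≤ dist z x := hwmin' x ⟨hxT, mem_closedBall.mpr le_rfl⟩
        push_neg at hcase
        rw [dist_comm z x] at h1
        rw [dist_comm z q]
        linarith
    have hwz : w ≠ z := by
      intro h
      exact hzΩ (h ▸ hwT.1)
    have hD : 0 < dist z w := dist_pos.mpr (Ne.symm hwz)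
    obtain ⟨u, hu⟩ : ∃ u, (dist z w)⁻¹ • (z - w) = u := ⟨_, rfl⟩
    have hzw : z - w = (dist z w) • u := by
      rw [← hu, smul_smul, mul_inv_cancel₀ (ne_of_gt hD), one_smul]
    have hu1 : ‖u‖ = 1 := by
      rw [← hu, norm_smul, Real.norm_eq_abs, abs_of_pos (inv_pos.mpr hD), ← dist_eq_norm,
        inv_mul_cancel₀ (ne_of_gt hD)]
    obtain ⟨c, hc⟩ : ∃ c, w - r • u = c := ⟨_, rfl⟩
    by_cases hcase : x ∈ closedBall c r ∧ y ∈ closedBall c r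
    · -- z must be in this ball, but it is too far from c
      have h1 := hz c hcase.1 hcase.2
      rw [mem_closedBall, dist_eq_norm] at h1
      have h2 : z - c = (dist z w + r) • u := by
        rw [← hc]
        have h3 : z - (w - r • u) = (z - w) + r • u := by module
        rw [h3, hzw]
        module
      rw [h2, norm_smul, Real.norm_eq_abs, abs_of_pos (by linarith), hu1, mul_one] at h1
      linarith
    · -- some endpoint p is outside the ball B(c,r)
      have hp : ∃ p ∈ Ω ∩ spindle r x y, r < ‖p - c‖ := by
        rcases not_and_or.mp hcase with h | h
        · refine ⟨x, hxT, ?_⟩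
          rw [← dist_eq_norm]
          exact lt_of_not_ge fun hle => h (mem_closedBall.mpr hle)
        · refine ⟨y, hyT, ?_⟩
          rw [← dist_eq_norm]
          exact lt_of_not_ge fun hle => h (mem_closedBall.mpr hle)
      obtain ⟨p, hpT, hpc⟩ := hp
      have hpc2 : ‖p - c‖ ^ 2 = ‖p - w‖ ^ 2 + 2 * (r * ⟪p - w, u⟫) + r ^ 2 := by
        have h3 : p - c = (p - w) + r • u := by rw [← hc]; module
        rw [h3, norm_add_sq_real, real_inner_smul_right, norm_smul, Real.norm_eq_abs,
          abs_of_pos hr, hu1, mul_one]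
      have hγ2 : 2 * r * ⟪u, w - p⟫ < ‖w - p‖ ^ 2 := by
        have h4 : r ^ 2 < ‖p - c‖ ^ 2 := by nlinarith [norm_nonneg (p - c)]
        have h5 : ⟪u, w - p⟫ = -⟪p - w, u⟫ := by
          rw [real_inner_comm, show w - p = -(p - w) from by abel, inner_neg_left]
        have h6 : ‖w - p‖ = ‖p - w‖ := norm_sub_rev w p
        rw [h5, h6]
        nlinarith [hpc2]
      exact min_not_closer hr hTreg hwT hpT hmin hD hzw hu1 hγ2
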